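/- Let h, h^(n) be Borel-measurable real-valued functions on a metric space S that are uniformly bounded, and let μ^(n) be probability measures on S converging in total variation to μ. If sup_{C ∈ B(S)} |∫_C h^(n) dμ^(n) − ∫_C h dμ| → 0 as n → ∞, then h^(n) converges to h in μ-probability, and hence some subsequence h^(n_k) converges to h μ-almost surely. -/

import Mathlib

open MeasureTheory Filter Topology

lemma intbl_of_bdd {S : Type*} [MeasurableSpace S] (f : S → ℝ) (hf : Measurable f) (M : ℝ)
    (hb : ∀ s, |f s| ≤ M) (μ : Measure S) [IsFiniteMeasure μ] : Integrable f μ :=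
  (integrable_const M).mono' hf.aestronglyMeasurable
    (Filter.Eventually.of_forall fun s => (Real.norm_eq_abs _) ▸ hb s)

lemma key_tv {S : Type*} [MeasurableSpace S] (f : S → ℝ) (hf : Measurable f)
    (M : ℝ) (hM : 0 ≤ M) (hb : ∀ s, |f s| ≤ M)
    (μ ν : Measure S) [IsProbabilityMeasure μ] [IsProbabilityMeasure ν]
    (C : Set S) (hC : MeasurableSet C) (t : ℝ)
    (ht : ∀ B : Set S, MeasurableSet B → |(μ B).toReal - (ν B).toReal| ≤ t) :
    |∫ s in C, f s ∂μ - ∫ s in C, f s ∂ν| ≤ 3 * M * t := by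
  have ht0 : 0 ≤ t := le_trans (by simp) (ht ∅ MeasurableSet.empty)
  set g : S → ℝ := fun s => f s + M with hg_def
  have hg : Measurable g := hf.add_const M
  have hg0 : ∀ s, 0 ≤ g s := fun s => by
    have := (abs_le.1 (hb s)).1; simp [hg_def]; linarith
  have hg2M : ∀ s, g s ≤ 2 * M := fun s => by
    have := (abs_le.1 (hb s)).2; simp [hg_def]; linarith
  have hgb : ∀ s, |g s| ≤ 2 * M := fun s => abs_le.2 ⟨by linarith [hg0 s], hg2M s⟩
  -- integrability
  have hintμ : Integrable g (μ.restrict C) := intbl_of_bdd g hg (2*M) hgb _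
  have hintν : Integrable g (ν.restrict C) := intbl_of_bdd g hg (2*M) hgb _
  -- layer cake representation
  have eqμ := hintμ.integral_eq_integral_meas_lt (Filter.Eventually.of_forall hg0)
  have eqν := hintν.integral_eq_integral_meas_lt (Filter.Eventually.of_forall hg0)
  set F : ℝ → ℝ := fun τ => ((μ.restrict C) {a | τ < g a}).toReal with hF_def
  set G : ℝ → ℝ := fun τ => ((ν.restrict C) {a | τ < g a}).toReal with hG_def
  -- properties
  have hFanti : Antitone F := fun a b hab => by
    apply ENNReal.toReal_mono (measure_ne_top _ _)
    exact measure_mono (fun x hx => lt_of_le_of_lt hab hx)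
  have hGanti : Antitone G := fun a b hab => by
    apply ENNReal.toReal_mono (measure_ne_top _ _)
    exact measure_mono (fun x hx => lt_of_le_of_lt hab hx)
  have hFG_zero : ∀ τ, 2 * M ≤ τ → F τ = 0 ∧ G τ = 0 := by
    intro τ hτ
    have hempty : {a | τ < g a} = ∅ := by
      ext a; simp only [Set.mem_setOf_eq, Set.mem_empty_iff_false, iff_false, not_lt]
      exact le_trans (hg2M a) hτ
    constructor <;> simp [hF_def, hG_def, hempty]
  have hFG_le : ∀ τ, |F τ - G τ| ≤ t := by
    intro τ
    have hms : MeasurableSet {a | τ < g a} := measurableSet_lt measurable_const hg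
    have hBmeas : MeasurableSet (C ∩ {a | τ < g a}) := hC.inter hms
    have hμr : (μ.restrict C) {a | τ < g a} = μ (C ∩ {a | τ < g a}) := by
      rw [Measure.restrict_apply hms, Set.inter_comm]
    have hνr : (ν.restrict C) {a | τ < g a} = ν (C ∩ {a | τ < g a}) := by
      rw [Measure.restrict_apply hms, Set.inter_comm]
    simp only [hF_def, hG_def, hμr, hνr]
    exact ht _ hBmeas
  have hF01 : ∀ τ, 0 ≤ F τ ∧ F τ ≤ 1 := fun τ =>
    ⟨ENNReal.toReal_nonneg, by
      apply ENNReal.toReal_le_of_le_ofReal one_pos.le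
      simpa using le_trans (measure_mono (Set.subset_univ _))
        (by simp [Measure.restrict_apply_univ]; exact prob_le_one)⟩
  have hG01 : ∀ τ, 0 ≤ G τ ∧ G τ ≤ 1 := fun τ =>
    ⟨ENNReal.toReal_nonneg, by
      apply ENNReal.toReal_le_of_le_ofReal one_pos.le
      simpa using le_trans (measure_mono (Set.subset_univ _))
        (by simp [Measure.restrict_apply_univ]; exact prob_le_one)⟩
  have hFmeas : Measurable F := hFanti.measurable
  have hGmeas : Measurable G := hGanti.measurable
  -- integrability of F and G on (0, ∞)
  have hbound_int : Integrable ((Set.Ioc (0:ℝ) (2*M)).indicator fun _ => (1:ℝ))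
      (volume.restrict (Set.Ioi 0)) := by
    rw [integrable_indicator_iff measurableSet_Ioc]
    refine integrableOn_const (ne_of_lt ?_)
    exact lt_of_le_of_lt (Measure.restrict_apply_le _ _) measure_Ioc_lt_top
  have hind : ∀ (H : ℝ → ℝ), (∀ τ, 0 ≤ H τ ∧ H τ ≤ 1) → (∀ τ, 2*M ≤ τ → H τ = 0) →
      ∀ τ ∈ Set.Ioi (0:ℝ), ‖H τ‖ ≤ (Set.Ioc (0:ℝ) (2*M)).indicator (fun _ => (1:ℝ)) τ := by
    intro H h01 hz τ hτ
    rw [Real.norm_eq_abs, abs_of_nonneg (h01 τ).1]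
    by_cases hcase : τ ≤ 2*M
    · rw [Set.indicator_of_mem (Set.mem_Ioc.2 ⟨Set.mem_Ioi.1 hτ, hcase⟩)]; exact (h01 τ).2
    · rw [Set.indicator_of_notMem (fun hmem => hcase hmem.2), hz τ (le_of_lt (not_le.1 hcase))]
  have hFint : Integrable F (volume.restrict (Set.Ioi 0)) := by
    refine hbound_int.mono' hFmeas.aestronglyMeasurable ?_
    exact (ae_restrict_iff' measurableSet_Ioi).2 (Filter.Eventually.of_forall
      (hind F hF01 (fun τ hτ => (hFG_zero τ hτ).1)))
  have hGint : Integrable G (volume.restrict (Set.Ioi 0)) := by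
    refine hbound_int.mono' hGmeas.aestronglyMeasurable ?_
    exact (ae_restrict_iff' measurableSet_Ioi).2 (Filter.Eventually.of_forall
      (hind G hG01 (fun τ hτ => (hFG_zero τ hτ).2)))
  -- bound on the difference of the layer-cake integrals
  have htind_int : Integrable ((Set.Ioc (0:ℝ) (2*M)).indicator fun _ => t)
      (volume.restrict (Set.Ioi 0)) := by
    rw [integrable_indicator_iff measurableSet_Ioc]
    refine integrableOn_const (ne_of_lt ?_)
    exact lt_of_le_of_lt (Measure.restrict_apply_le _ _) measure_Ioc_lt_top
  have hdiff_bound : |(∫ τ in Set.Ioi (0:ℝ), F τ) - ∫ τ in Set.Ioi (0:ℝ), G τ| ≤ 2 * M * t := by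
    rw [← integral_sub hFint hGint]
    have h1 : |∫ τ in Set.Ioi (0:ℝ), (F τ - G τ)| ≤ ∫ τ in Set.Ioi (0:ℝ), |F τ - G τ| := by
      simpa [Real.norm_eq_abs] using
        norm_integral_le_integral_norm (μ := volume.restrict (Set.Ioi 0)) (fun τ => F τ - G τ)
    have h2 : ∫ τ in Set.Ioi (0:ℝ), |F τ - G τ| ≤
        ∫ τ in Set.Ioi (0:ℝ), (Set.Ioc (0:ℝ) (2*M)).indicator (fun _ => t) τ := by
      refine integral_mono_ae (hFint.sub hGint).abs htind_int ?_
      refine (ae_restrict_iff' measurableSet_Ioi).2 (Filter.Eventually.of_forall ?_)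
      intro τ hτ
      by_cases hcase : τ ≤ 2*M
      · rw [Set.indicator_of_mem (Set.mem_Ioc.2 ⟨Set.mem_Ioi.1 hτ, hcase⟩)]; exact hFG_le τ
      · rw [Set.indicator_of_notMem (fun hmem => hcase hmem.2)]
        have hz := hFG_zero τ (le_of_lt (not_le.1 hcase))
        simp [hz.1, hz.2]
    have h3 : ∫ τ in Set.Ioi (0:ℝ), (Set.Ioc (0:ℝ) (2*M)).indicator (fun _ => t) τ
        = 2 * M * t := by
      rw [integral_indicator measurableSet_Ioc]
      rw [Measure.restrict_restrict measurableSet_Ioc]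
      rw [Set.inter_eq_left.2 (fun x hx => hx.1)]
      rw [setIntegral_const, measureReal_def, Real.volume_Ioc]
      rw [ENNReal.toReal_ofReal (by linarith)]
      rw [smul_eq_mul]; ring
    linarith [le_trans h1 h2]
  -- express set integrals of f via g
  have hfintμ : Integrable f (μ.restrict C) := intbl_of_bdd f hf M hb _
  have hfintν : Integrable f (ν.restrict C) := intbl_of_bdd f hf M hb _
  have hμg : ∫ s in C, g s ∂μ = (∫ s in C, f s ∂μ) + M * ((μ C).toReal) := by
    simp only [hg_def]
    rw [integral_add hfintμ (integrable_const M), setIntegral_const, smul_eq_mul, mul_comm, measureReal_def]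
  have hνg : ∫ s in C, g s ∂ν = (∫ s in C, f s ∂ν) + M * ((ν C).toReal) := by
    simp only [hg_def]
    rw [integral_add hfintν (integrable_const M), setIntegral_const, smul_eq_mul, mul_comm, measureReal_def]
  have hkey : ∫ s in C, f s ∂μ - ∫ s in C, f s ∂ν =
      ((∫ τ in Set.Ioi (0:ℝ), F τ) - ∫ τ in Set.Ioi (0:ℝ), G τ)
      - M * ((μ C).toReal - (ν C).toReal) := by
    rw [← (show _ = ∫ τ in Set.Ioi (0:ℝ), F τ from eqμ), ← (show _ = ∫ τ in Set.Ioi (0:ℝ), G τ from eqν), hμg, hνg]; ring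
  rw [hkey]
  have hC_bound : |(μ C).toReal - (ν C).toReal| ≤ t := ht C hC
  calc |((∫ τ in Set.Ioi (0:ℝ), F τ) - ∫ τ in Set.Ioi (0:ℝ), G τ)
      - M * ((μ C).toReal - (ν C).toReal)|
      ≤ |(∫ τ in Set.Ioi (0:ℝ), F τ) - ∫ τ in Set.Ioi (0:ℝ), G τ|
        + |M * ((μ C).toReal - (ν C).toReal)| := abs_sub _ _
    _ ≤ 2 * M * t + M * t := by
        refine add_le_add hdiff_bound ?_
        rw [abs_mul, abs_of_nonneg hM]
        exact mul_le_mul_of_nonneg_left hC_bound hM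
    _ = 3 * M * t := by ring

lemma le_iSup_meas {S : Type*} [MeasurableSpace S] (f : Set S → ℝ) (K : ℝ) (hK : 0 ≤ K)
    (hf : ∀ B, MeasurableSet B → f B ≤ K) (C : Set S) (hC : MeasurableSet C) :
    f C ≤ ⨆ (B : Set S) (_ : MeasurableSet B), f B := by
  have h1 : ∀ B : Set S, (⨆ (_ : MeasurableSet B), f B) ≤ K := by
    intro B
    by_cases h : MeasurableSet B
    · have : (⨆ (_ : MeasurableSet B), f B) = f B := ciSup_pos h
      rw [this]; exact hf B h
    · have : IsEmpty (MeasurableSet B) := ⟨h⟩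
      rw [Real.iSup_of_isEmpty]; exact hK
  have h2 : (⨆ (_ : MeasurableSet C), f C) = f C := ciSup_pos hC
  calc f C = ⨆ (_ : MeasurableSet C), f C := h2.symm
    _ ≤ ⨆ (B : Set S), ⨆ (_ : MeasurableSet B), f B :=
        le_ciSup ⟨K, by rintro x ⟨B, rfl⟩; exact h1 B⟩ C

lemma abs_setIntegral_le {S : Type*} [MeasurableSpace S] (f : S → ℝ) (M : ℝ) (hM : 0 ≤ M)
    (hb : ∀ s, |f s| ≤ M) (μ : Measure S) [IsProbabilityMeasure μ] (C : Set S) :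
    |∫ s in C, f s ∂μ| ≤ M := by
  have h1 : ‖∫ s in C, f s ∂μ‖ ≤ M * ((μ.restrict C) Set.univ).toReal :=
    norm_integral_le_of_norm_le_const
      (Filter.Eventually.of_forall fun s => by rw [Real.norm_eq_abs]; exact hb s)
  rw [Real.norm_eq_abs] at h1
  have h2 : ((μ.restrict C) Set.univ).toReal ≤ 1 := by
    rw [Measure.restrict_apply_univ]
    have := ENNReal.toReal_mono (by simp) (prob_le_one (μ := μ) (s := C))
    simpa using this
  calc |∫ s in C, f s ∂μ| ≤ M * ((μ.restrict C) Set.univ).toReal := h1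
    _ ≤ M * 1 := mul_le_mul_of_nonneg_left h2 hM
    _ = M := mul_one M

theorem stmt15 {S : Type*} [MetricSpace S] [MeasurableSpace S] [BorelSpace S]
    (h : S → ℝ) (hN : ℕ → S → ℝ)
    (hm : Measurable h) (hNm : ∀ n, Measurable (hN n))
    (M : ℝ) (hb : ∀ s, |h s| ≤ M) (hNb : ∀ n s, |hN n s| ≤ M)
    (μ : Measure S) (μN : ℕ → Measure S)
    (hμ : IsProbabilityMeasure μ) (hμN : ∀ n, IsProbabilityMeasure (μN n))
    (htv : Tendsto (fun n => ⨆ (B : Set S) (_ : MeasurableSet B),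
        |((μN n) B).toReal - (μ B).toReal|) atTop (𝓝 0))
    (hsup : Tendsto (fun n => ⨆ (C : Set S) (_ : MeasurableSet C),
        |∫ s in C, hN n s ∂(μN n) - ∫ s in C, h s ∂μ|) atTop (𝓝 0)) :
    TendstoInMeasure μ hN atTop h ∧
    ∃ φ : ℕ → ℕ, StrictMono φ ∧
      ∀ᵐ s ∂μ, Tendsto (fun k => hN (φ k) s) atTop (𝓝 (h s)) := by
  haveI := hμ
  have hSne : Nonempty S := by
    by_contra hne
    rw [not_nonempty_iff] at hne
    have h1 : μ Set.univ = 1 := measure_univ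
    rw [Set.univ_eq_empty_iff.2 hne, measure_empty] at h1
    exact zero_ne_one h1
  have hM : 0 ≤ M := le_trans (abs_nonneg _) (hb (Classical.arbitrary S))
  set t : ℕ → ℝ := fun n => ⨆ (B : Set S) (_ : MeasurableSet B),
      |((μN n) B).toReal - (μ B).toReal| with ht_def
  set a : ℕ → ℝ := fun n => ⨆ (C : Set S) (_ : MeasurableSet C),
      |∫ s in C, hN n s ∂(μN n) - ∫ s in C, h s ∂μ| with ha_def
  have htB : ∀ n (B : Set S), MeasurableSet B → |((μN n) B).toReal - (μ B).toReal| ≤ t n := by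
    intro n B hB
    show |((μN n) B).toReal - (μ B).toReal| ≤ ⨆ (B : Set S) (_ : MeasurableSet B),
        |((μN n) B).toReal - (μ B).toReal|
    refine le_iSup_meas (fun B => |((μN n) B).toReal - (μ B).toReal|) 2 (by norm_num) ?_ B hB
    intro B _
    haveI := hμN n
    have h1 : ((μN n) B).toReal ≤ 1 := by
      have := ENNReal.toReal_mono (by simp) (prob_le_one (μ := μN n) (s := B))
      simpa using this
    have h2 : ((μ) B).toReal ≤ 1 := by
      have := ENNReal.toReal_mono (by simp) (prob_le_one (μ := μ) (s := B))
      simpa using this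
    calc |((μN n) B).toReal - (μ B).toReal|
        ≤ |((μN n) B).toReal| + |(μ B).toReal| := abs_sub _ _
      _ ≤ 1 + 1 := add_le_add
          (by rw [abs_of_nonneg ENNReal.toReal_nonneg]; exact h1)
          (by rw [abs_of_nonneg ENNReal.toReal_nonneg]; exact h2)
      _ = 2 := by norm_num
  have haB : ∀ n (C : Set S), MeasurableSet C →
      |∫ s in C, hN n s ∂(μN n) - ∫ s in C, h s ∂μ| ≤ a n := by
    intro n C hC
    show |∫ s in C, hN n s ∂(μN n) - ∫ s in C, h s ∂μ| ≤ ⨆ (C : Set S) (_ : MeasurableSet C),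
        |∫ s in C, hN n s ∂(μN n) - ∫ s in C, h s ∂μ|
    refine le_iSup_meas (fun C => |∫ s in C, hN n s ∂(μN n) - ∫ s in C, h s ∂μ|) (2*M)
      (by linarith) ?_ C hC
    intro C _
    haveI := hμN n
    calc |∫ s in C, hN n s ∂(μN n) - ∫ s in C, h s ∂μ|
        ≤ |∫ s in C, hN n s ∂(μN n)| + |∫ s in C, h s ∂μ| := abs_sub _ _
      _ ≤ M + M := add_le_add (abs_setIntegral_le _ M hM (hNb n) _ _)
          (abs_setIntegral_le _ M hM hb _ _)
      _ = 2 * M := by ring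
  have ht0 : ∀ n, 0 ≤ t n := fun n => by
    have := htB n ∅ MeasurableSet.empty; simpa using this
  have ha0 : ∀ n, 0 ≤ a n := fun n => by
    have := haB n ∅ MeasurableSet.empty; simpa using this
  have key : TendstoInMeasure μ hN atTop h := by
    rw [tendstoInMeasure_iff_dist]
    intro ε hε
    have hbound : ∀ n, (μ {x | ε ≤ dist (hN n x) (h x)}).toReal
        ≤ (2 * (a n + 3 * M * t n)) / ε := by
      intro n
      haveI := hμN n
      set Cs := {x | ε ≤ hN n x - h x} with hCs_def
      set Ds := {x | ε ≤ h x - hN n x} with hDs_def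
      have hCs : MeasurableSet Cs := measurableSet_le measurable_const ((hNm n).sub hm)
      have hDs : MeasurableSet Ds := measurableSet_le measurable_const (hm.sub (hNm n))
      have hsubset : {x | ε ≤ dist (hN n x) (h x)} ⊆ Cs ∪ Ds := by
        intro x hx
        rw [Set.mem_setOf_eq, Real.dist_eq] at hx
        rcases le_abs.1 hx with h1 | h1
        · exact Or.inl h1
        · exact Or.inr (by simpa [hDs_def] using h1)
      have hint1 : Integrable (hN n) μ := intbl_of_bdd _ (hNm n) M (hNb n) μ
      have hint2 : Integrable h μ := intbl_of_bdd _ hm M hb μ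
      have hintsub : Integrable (fun x => hN n x - h x) μ := hint1.sub hint2
      have hintsub2 : Integrable (fun x => h x - hN n x) μ := hint2.sub hint1
      have httv : ∀ B : Set S, MeasurableSet B → |(μ B).toReal - ((μN n) B).toReal| ≤ t n := by
        intro B hB; rw [abs_sub_comm]; exact htB n B hB
      -- estimate on Cs
      have hCest : ε * (μ Cs).toReal ≤ 3 * M * t n + a n := by
        have h1 : ε * (μ Cs).toReal ≤ ∫ x in Cs, (hN n x - h x) ∂μ :=
          by
            have := setIntegral_ge_of_const_le hCs (measure_ne_top μ Cs)
              (fun x hx => hx) hintsub.integrableOn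
            rw [smul_eq_mul, measureReal_def, mul_comm] at this; exact this
        have h2 : ∫ x in Cs, (hN n x - h x) ∂μ
            = (∫ x in Cs, hN n x ∂μ) - ∫ x in Cs, h x ∂μ :=
          integral_sub hint1.integrableOn hint2.integrableOn
        have h3 : |∫ s in Cs, hN n s ∂μ - ∫ s in Cs, hN n s ∂(μN n)| ≤ 3 * M * (t n) :=
          key_tv (hN n) (hNm n) M hM (hNb n) μ (μN n) Cs hCs (t n) httv
        have h4 := haB n Cs hCs
        have h5 := abs_le.1 h3
        have h6 := abs_le.1 h4
        have : (∫ x in Cs, hN n x ∂μ) - ∫ x in Cs, h x ∂μ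
            = (∫ s in Cs, hN n s ∂μ - ∫ s in Cs, hN n s ∂(μN n))
              + (∫ s in Cs, hN n s ∂(μN n) - ∫ s in Cs, h s ∂μ) := by ring
        rw [h2, this] at h1
        linarith [h5.2, h6.2]
      -- estimate on Ds
      have hDest : ε * (μ Ds).toReal ≤ 3 * M * t n + a n := by
        have h1 : ε * (μ Ds).toReal ≤ ∫ x in Ds, (h x - hN n x) ∂μ :=
          by
            have := setIntegral_ge_of_const_le hDs (measure_ne_top μ Ds)
              (fun x hx => hx) hintsub2.integrableOn
            rw [smul_eq_mul, measureReal_def, mul_comm] at this; exact this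
        have h2 : ∫ x in Ds, (h x - hN n x) ∂μ
            = (∫ x in Ds, h x ∂μ) - ∫ x in Ds, hN n x ∂μ :=
          integral_sub hint2.integrableOn hint1.integrableOn
        have h3 : |∫ s in Ds, hN n s ∂μ - ∫ s in Ds, hN n s ∂(μN n)| ≤ 3 * M * (t n) :=
          key_tv (hN n) (hNm n) M hM (hNb n) μ (μN n) Ds hDs (t n) httv
        have h4 := haB n Ds hDs
        have h5 := abs_le.1 h3
        have h6 := abs_le.1 h4
        have : (∫ x in Ds, h x ∂μ) - ∫ x in Ds, hN n x ∂μ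
            = -((∫ s in Ds, hN n s ∂μ - ∫ s in Ds, hN n s ∂(μN n)))
              - (∫ s in Ds, hN n s ∂(μN n) - ∫ s in Ds, h s ∂μ) := by ring
        rw [h2, this] at h1
        linarith [h5.1, h6.1]
      have hAle : (μ {x | ε ≤ dist (hN n x) (h x)}).toReal
          ≤ (μ Cs).toReal + (μ Ds).toReal := by
        have h1 : μ {x | ε ≤ dist (hN n x) (h x)} ≤ μ Cs + μ Ds :=
          le_trans (measure_mono hsubset) (measure_union_le _ _)
        have h2 : (μ Cs + μ Ds).toReal = (μ Cs).toReal + (μ Ds).toReal :=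
          ENNReal.toReal_add (measure_ne_top _ _) (measure_ne_top _ _)
        calc (μ {x | ε ≤ dist (hN n x) (h x)}).toReal
            ≤ (μ Cs + μ Ds).toReal := ENNReal.toReal_mono
              (ENNReal.add_ne_top.2 ⟨measure_ne_top _ _, measure_ne_top _ _⟩) h1
          _ = (μ Cs).toReal + (μ Ds).toReal := h2
      rw [le_div_iff₀ hε]
      nlinarith [mul_le_mul_of_nonneg_left hAle (le_of_lt hε)]
    have hblim : Tendsto (fun n => (2 * (a n + 3 * M * t n)) / ε) atTop (𝓝 0) := by
      have := (((hsup.add (htv.const_mul (3*M))).const_mul 2).div_const ε)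
      simpa using this
    have htoReal : Tendsto (fun n => (μ {x | ε ≤ dist (hN n x) (h x)}).toReal) atTop (𝓝 0) :=
      tendsto_of_tendsto_of_tendsto_of_le_of_le tendsto_const_nhds hblim
        (fun n => ENNReal.toReal_nonneg) hbound
    have := (ENNReal.tendsto_toReal_iff
      (fun n => measure_ne_top μ {x | ε ≤ dist (hN n x) (h x)})
      (x := 0) (by simp)).1 (by simpa using htoReal)
    exact this
  exact ⟨key, key.exists_seq_tendsto_ae⟩
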